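/- Let X be a Banach space (over ℝ or ℂ) and let U and V be weak*-closed subspaces of the dual X* with U + V = X* and U ∩ V = {0}. Then the pre-annihilators satisfy ^⊥U + ^⊥V = X and ^⊥U ∩ ^⊥V = {0}; in particular ^⊥U is a complemented subspace of X with complement ^⊥V. (Lemma 4.2(b)) -/

import Mathlib

open NormedSpace

/-- A (necessarily closed) subspace `M` of a normed space is *complemented* if it is closed and
there exists a closed subspace `N` with `M + N = X` and `M ∩ N = {0}`. -/
def IsComplementedSubspace {𝕜 X : Type*} [NormedField 𝕜] [NormedAddCommGroup X]
    [NormedSpace 𝕜 X] (M : Submodule 𝕜 X) : Prop :=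
  IsClosed (M : Set X) ∧
    ∃ N : Submodule 𝕜 X, IsClosed (N : Set X) ∧ M ⊔ N = ⊤ ∧ M ⊓ N = ⊥

/-- A set of functionals is weak*-closed if it is closed in the weak* topology of `X*`. -/
def IsWeakStarClosed {𝕜 X : Type*} [NontriviallyNormedField 𝕜] [NormedAddCommGroup X]
    [NormedSpace 𝕜 X] (U : Set (StrongDual 𝕜 X)) : Prop :=
  IsClosed (StrongDual.toWeakDual '' U)

/-- A subspace `U` of `X*` is weak* complemented if it is weak*-closed and there is a
weak*-closed subspace `V` of `X*` with `U + V = X*` and `U ∩ V = {0}`. -/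
def IsWeakStarComplemented {𝕜 X : Type*} [NontriviallyNormedField 𝕜] [NormedAddCommGroup X]
    [NormedSpace 𝕜 X] (U : Submodule 𝕜 (StrongDual 𝕜 X)) : Prop :=
  IsWeakStarClosed (U : Set (StrongDual 𝕜 X)) ∧
    ∃ V : Submodule 𝕜 (StrongDual 𝕜 X), IsWeakStarClosed (V : Set (StrongDual 𝕜 X)) ∧
      U ⊔ V = ⊤ ∧ U ⊓ V = ⊥

/-- The pre-annihilator `^⊥B = {x ∈ X : f(x) = 0 for all f ∈ B}` of a subspace of `X*`. -/
def preAnnihilator {𝕜 X : Type*} [NontriviallyNormedField 𝕜] [NormedAddCommGroup X]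
    [NormedSpace 𝕜 X] (B : Submodule 𝕜 (StrongDual 𝕜 X)) : Submodule 𝕜 X where
  carrier := {x | ∀ f ∈ B, f x = 0}
  add_mem' := by intro a b ha hb f hf; simp [ha f hf, hb f hf]
  zero_mem' := by intro f hf; simp
  smul_mem' := by intro c a ha f hf; simp [ha f hf]

section Aux

open NormedSpace

variable {𝕜 X : Type*} [RCLike 𝕜] [NormedAddCommGroup X] [NormedSpace 𝕜 X]

lemma mem_preAnnihilator' {B : Submodule 𝕜 (StrongDual 𝕜 X)} {x : X} :
    x ∈ preAnnihilator B ↔ ∀ f ∈ B, f x = 0 := Iff.rfl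

lemma preAnnihilator_isClosed (B : Submodule 𝕜 (StrongDual 𝕜 X)) :
    IsClosed ((preAnnihilator B : Set X)) := by
  have h : (preAnnihilator B : Set X) = ⋂ f ∈ B, (f ⁻¹' {0} : Set X) := by
    ext x
    simp [mem_preAnnihilator', Set.mem_iInter]
  rw [h]
  exact isClosed_biInter fun f _ => isClosed_singleton.preimage f.continuous

/-- Bipolar-type lemma: a functional vanishing on the pre-annihilator of a weak*-closed
subspace belongs to that subspace. -/
lemma mem_of_forall_preAnnihilator_eq_zero (U : Submodule 𝕜 (StrongDual 𝕜 X))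
    (hU : IsWeakStarClosed (U : Set (StrongDual 𝕜 X))) {f : StrongDual 𝕜 X}
    (hf : ∀ x ∈ preAnnihilator U, f x = 0) : f ∈ U := by
  classical
  by_contra hfU
  have hS : IsOpen ((StrongDual.toWeakDual '' (U : Set (StrongDual 𝕜 X)))ᶜ) := hU.isOpen_compl
  obtain ⟨O, hO, hpre⟩ := isOpen_induced_iff.mp hS
  have hfS : StrongDual.toWeakDual f ∈ (StrongDual.toWeakDual '' (U : Set (StrongDual 𝕜 X)))ᶜ := by
    intro hmem
    obtain ⟨g, hg, hgf⟩ := hmem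
    exact hfU (by rwa [StrongDual.toWeakDual.injective hgf] at hg)
  have hfO : (fun y : X => topDualPairing 𝕜 X (StrongDual.toWeakDual f) y) ∈ O := by
    rw [← hpre] at hfS
    exact hfS
  obtain ⟨I, u, hIu, hsub⟩ := isOpen_pi_iff.mp hO _ hfO
  have key : ∀ g ∈ U, ¬ (∀ x ∈ I, g x = f x) := by
    intro g hg hgx
    have hmem : (fun y : X => topDualPairing 𝕜 X (StrongDual.toWeakDual g) y) ∈ (I : Set X).pi u := by
      intro x hx
      show (topDualPairing 𝕜 X) (StrongDual.toWeakDual g) x ∈ u x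
      rw [show (topDualPairing 𝕜 X) (StrongDual.toWeakDual g) x = f x from hgx x hx]
      exact (hIu x hx).2
    exact (Set.ext_iff.mp hpre (StrongDual.toWeakDual g)).mp (hsub hmem) ⟨g, hg, rfl⟩
  -- the finite-dimensional separation
  let T : StrongDual 𝕜 X →ₗ[𝕜] (↥I → 𝕜) :=
    { toFun := fun g i => g (i : X)
      map_add' := by intro g h; ext i; simp
      map_smul' := by intro c g; ext i; simp }
  have hc : T f ∉ U.map T := by
    rintro ⟨g, hg, hgf⟩
    exact key g hg fun x hx => congrFun hgf ⟨x, hx⟩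
  rw [← Subspace.forall_mem_dualAnnihilator_apply_eq_zero_iff (U.map T) (T f)] at hc
  push_neg at hc
  obtain ⟨lam, hlam0, hlamc⟩ := hc
  rw [Submodule.mem_dualAnnihilator] at hlam0
  set x0 : X := ∑ i : ↥I, lam (Pi.single i 1) • (i : X) with hx0def
  have hTsingle : ∀ g : StrongDual 𝕜 X, T g = ∑ i : ↥I, g (i : X) • (Pi.single i (1 : 𝕜) : ↥I → 𝕜) := by
    intro g
    ext j
    simp [T, Pi.single_apply, Finset.sum_ite_eq']
  have hx0 : ∀ g : StrongDual 𝕜 X, g x0 = lam (T g) := by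
    intro g
    rw [hx0def, map_sum, hTsingle g, map_sum]
    refine Finset.sum_congr rfl fun i _ => ?_
    rw [map_smul, map_smul, smul_eq_mul, smul_eq_mul, mul_comm]
  have hx0U : x0 ∈ preAnnihilator U := by
    intro g hg
    rw [hx0 g]
    exact hlam0 (T g) ⟨g, hg, rfl⟩
  have h0 := hf x0 hx0U
  rw [hx0 f] at h0
  exact hlamc h0

end Aux


/-- Lemma 4.2(b): if `U` and `V` are complementary weak*-closed subspaces of `X*`, then the
pre-annihilators `^⊥U` and `^⊥V` are complementary subspaces of `X`; in particular `^⊥U` is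
complemented in `X`. -/
theorem preAnnihilator_complemented_of_weakStar_complemented
    {𝕜 X : Type*} [RCLike 𝕜] [NormedAddCommGroup X] [NormedSpace 𝕜 X] [CompleteSpace X]
    (U V : Submodule 𝕜 (StrongDual 𝕜 X))
    (hU : IsWeakStarClosed (U : Set (StrongDual 𝕜 X))) (hV : IsWeakStarClosed (V : Set (StrongDual 𝕜 X)))
    (hsup : U ⊔ V = ⊤) (hinf : U ⊓ V = ⊥) :
    preAnnihilator U ⊔ preAnnihilator V = ⊤ ∧ preAnnihilator U ⊓ preAnnihilator V = ⊥ ∧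
      IsComplementedSubspace (preAnnihilator U) := by
  classical
  set N1 := preAnnihilator U with hN1
  set N2 := preAnnihilator V with hN2
  -- norm closedness of U and V
  have hUc : IsClosed ((U : Set (StrongDual 𝕜 X))) := by
    have h1 : (U : Set (StrongDual 𝕜 X))
        = StrongDual.toWeakDual ⁻¹' (StrongDual.toWeakDual '' (U : Set (StrongDual 𝕜 X))) :=
      (Set.preimage_image_eq _ StrongDual.toWeakDual.injective).symm
    rw [h1]
    exact hU.preimage Dual.toWeakDual_continuous
  have hVc : IsClosed ((V : Set (StrongDual 𝕜 X))) := by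
    have h1 : (V : Set (StrongDual 𝕜 X))
        = StrongDual.toWeakDual ⁻¹' (StrongDual.toWeakDual '' (V : Set (StrongDual 𝕜 X))) :=
      (Set.preimage_image_eq _ StrongDual.toWeakDual.injective).symm
    rw [h1]
    exact hV.preimage Dual.toWeakDual_continuous
  have hcompl : IsCompl U V := ⟨disjoint_iff.mpr hinf, codisjoint_iff.mpr hsup⟩
  let e := Submodule.prodEquivOfClosedCompl U V hcompl hUc hVc
  set C := ‖((e.symm : (StrongDual 𝕜 X) →L[𝕜] (U × V)))‖ with hCdef
  have hC0 : 0 ≤ C := norm_nonneg ((e.symm : (StrongDual 𝕜 X) →L[𝕜] (U × V)))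
  -- bounded decomposition
  have hdecomp : ∀ f : StrongDual 𝕜 X, ∃ u ∈ U, ∃ v ∈ V,
      f = u + v ∧ ‖u‖ ≤ C * ‖f‖ ∧ ‖v‖ ≤ C * ‖f‖ := by
    intro f
    refine ⟨(e.symm f).1, (e.symm f).1.2, (e.symm f).2, (e.symm f).2.2, ?_, ?_, ?_⟩
    · have h1 : e (e.symm f) = f := e.apply_symm_apply f
      have h2 : e (e.symm f) = ((e.symm f).1 : StrongDual 𝕜 X) + ((e.symm f).2 : StrongDual 𝕜 X) := rfl
      exact h1.symm.trans h2
    · calc ‖((e.symm f).1 : StrongDual 𝕜 X)‖ = ‖(e.symm f).1‖ := rfl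
        _ ≤ ‖e.symm f‖ := norm_fst_le _
        _ ≤ C * ‖f‖ := (e.symm : (StrongDual 𝕜 X) →L[𝕜] (U × V)).le_opNorm f
    · calc ‖((e.symm f).2 : StrongDual 𝕜 X)‖ = ‖(e.symm f).2‖ := rfl
        _ ≤ ‖e.symm f‖ := norm_snd_le _
        _ ≤ C * ‖f‖ := (e.symm : (StrongDual 𝕜 X) →L[𝕜] (U × V)).le_opNorm f
  -- the intersection of the pre-annihilators is trivial
  have hinf' : N1 ⊓ N2 = ⊥ := by
    rw [Submodule.eq_bot_iff]
    rintro x ⟨hx1, hx2⟩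
    refine eq_zero_of_forall_dual_eq_zero 𝕜 fun f => ?_
    obtain ⟨u, hu, v, hv, hf, -, -⟩ := hdecomp f
    rw [hf, ContinuousLinearMap.add_apply, hx1 u hu, hx2 v hv, add_zero]
  -- the key norm bounds
  have hbb : ∀ a ∈ N1, ∀ b ∈ N2, ‖a‖ ≤ C * ‖a + b‖ := by
    intro a ha b hb
    refine norm_le_dual_bound 𝕜 a (by positivity) fun f => ?_
    obtain ⟨u, hu, v, hv, hf, -, hnv⟩ := hdecomp f
    have h1 : f a = v (a + b) := by
      rw [hf, ContinuousLinearMap.add_apply, ha u hu, zero_add, map_add, hb v hv, add_zero]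
    rw [h1]
    calc ‖v (a + b)‖ ≤ ‖v‖ * ‖a + b‖ := v.le_opNorm _
      _ ≤ (C * ‖f‖) * ‖a + b‖ := mul_le_mul_of_nonneg_right hnv (norm_nonneg _)
      _ = C * ‖a + b‖ * ‖f‖ := by ring
  -- N1 ⊔ N2 is closed
  have hW : IsClosed ((N1 ⊔ N2 : Submodule 𝕜 X) : Set X) := by
    refine IsSeqClosed.isClosed ?_
    intro g x hg hx
    choose a ha b hb hab using fun n => Submodule.mem_sup.mp (hg n)
    have hgdiff : ∀ m n, ‖a m - a n‖ ≤ C * ‖g m - g n‖ := by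
      intro m n
      have h1 := hbb (a m - a n) (sub_mem (ha m) (ha n)) (b m - b n) (sub_mem (hb m) (hb n))
      have h2 : a m - a n + (b m - b n) = g m - g n := by
        rw [← hab m, ← hab n]; abel
      rwa [h2] at h1
    have hca : CauchySeq a := by
      rw [Metric.cauchySeq_iff]
      intro ε hε
      have hgc : CauchySeq g := hx.cauchySeq
      rw [Metric.cauchySeq_iff] at hgc
      obtain ⟨N, hN⟩ := hgc (ε / (C + 1)) (by positivity)
      refine ⟨N, fun m hm n hn => ?_⟩
      have h3 := hN m hm n hn
      rw [dist_eq_norm] at h3 ⊢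
      calc ‖a m - a n‖ ≤ C * ‖g m - g n‖ := hgdiff m n
        _ ≤ C * (ε / (C + 1)) := mul_le_mul_of_nonneg_left h3.le hC0
        _ < (C + 1) * (ε / (C + 1)) := mul_lt_mul_of_pos_right (lt_add_one C) (by positivity)
        _ = ε := by field_simp
    obtain ⟨la, hla⟩ := cauchySeq_tendsto_of_complete hca
    have hlaN1 : la ∈ N1 :=
      (preAnnihilator_isClosed U).mem_of_tendsto hla (Filter.Eventually.of_forall ha)
    have hbt : Filter.Tendsto b Filter.atTop (nhds (x - la)) := by
      have hbe : b = fun n => g n - a n := funext fun n => by rw [← hab n]; abel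
      rw [hbe]
      exact hx.sub hla
    have hxl : x - la ∈ N2 :=
      (preAnnihilator_isClosed V).mem_of_tendsto hbt (Filter.Eventually.of_forall hb)
    exact Submodule.mem_sup.mpr ⟨la, hlaN1, x - la, hxl, by abel⟩
  -- N1 ⊔ N2 = ⊤
  have hsup' : N1 ⊔ N2 = ⊤ := by
    by_contra hne
    obtain ⟨x, hx⟩ : ∃ x, x ∉ (N1 ⊔ N2 : Submodule 𝕜 X) := by
      by_contra h
      push_neg at h
      exact hne (Submodule.eq_top_iff'.mpr h)
    haveI : IsClosed ((N1 ⊔ N2 : Submodule 𝕜 X) : Set X) := hW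
    have hmkx : (Submodule.Quotient.mk x : X ⧸ (N1 ⊔ N2 : Submodule 𝕜 X)) ≠ 0 := by
      rwa [ne_eq, Submodule.Quotient.mk_eq_zero]
    obtain ⟨gq, -, hgq2⟩ := exists_dual_vector 𝕜 _ (norm_ne_zero_iff.mpr hmkx)
    let q : X →L[𝕜] (X ⧸ (N1 ⊔ N2 : Submodule 𝕜 X)) :=
      LinearMap.mkContinuous (N1 ⊔ N2 : Submodule 𝕜 X).mkQ 1 (fun m => by
        simpa [one_mul] using Submodule.Quotient.norm_mk_le (S := N1 ⊔ N2) m)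
    have hq : ∀ y : X, q y = Submodule.Quotient.mk y := fun y => rfl
    let φ : StrongDual 𝕜 X := gq.comp q
    have hφW : ∀ w ∈ (N1 ⊔ N2 : Submodule 𝕜 X), φ w = 0 := by
      intro w hw
      have h1 : q w = 0 := by rw [hq w, Submodule.Quotient.mk_eq_zero]; exact hw
      show gq (q w) = 0
      rw [h1, map_zero]
    have hφU : φ ∈ U := mem_of_forall_preAnnihilator_eq_zero U hU
      (fun y hy => hφW y (Submodule.mem_sup_left hy))
    have hφV : φ ∈ V := mem_of_forall_preAnnihilator_eq_zero V hV
      (fun y hy => hφW y (Submodule.mem_sup_right hy))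
    have hφ0 : φ = 0 := by
      have h1 : φ ∈ U ⊓ V := Submodule.mem_inf.mpr ⟨hφU, hφV⟩
      rw [hinf] at h1
      exact (Submodule.mem_bot 𝕜).mp h1
    have hφx : φ x = (‖(Submodule.Quotient.mk x : X ⧸ (N1 ⊔ N2 : Submodule 𝕜 X))‖ : 𝕜) := by
      show gq (q x) = _
      rw [hq x, hgq2]
    rw [hφ0] at hφx
    simp only [ContinuousLinearMap.zero_apply] at hφx
    have h2 : ‖(Submodule.Quotient.mk x : X ⧸ (N1 ⊔ N2 : Submodule 𝕜 X))‖ = 0 := by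
      exact_mod_cast hφx.symm
    exact hmkx (norm_eq_zero.mp h2)
  exact ⟨hsup', hinf', preAnnihilator_isClosed U, N2, preAnnihilator_isClosed V, hsup', hinf'⟩
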